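/- Doubly robust remainder bound: let P⋆ be a distribution on 𝒳×{0,1}×𝒴 with propensity π⋆ bounded below by η > 0, and let π_n (also bounded below by η) and 𝓗-valued functions θ_n, θ⋆ : 𝒳 → 𝓗 be given, for a separable Hilbert space 𝓗. Then the Bochner integral R := E⋆[ (1 − π⋆(X)/π_n(X)) (θ_n(X) − θ⋆(X)) ] satisfies ‖R‖_𝓗 ≤ η⁻¹ ‖π_n − π⋆‖_{L²(P⋆,X)} · ‖θ_n − θ⋆‖_{L²(P⋆,X;𝓗)}. -/

import Mathlib

open MeasureTheory

/-- **Doubly robust remainder bound.** Let `μ` be the covariate distribution, `π⋆, π_n`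
propensity functions bounded below by `η > 0`, and `θ_n, θ⋆ : 𝒳 → 𝓗` Hilbert-valued
outcome models. Then the Bochner integral
`R = E[(1 − π⋆(X)/π_n(X)) (θ_n(X) − θ⋆(X))]` satisfies
`‖R‖ ≤ η⁻¹ ‖π_n − π⋆‖_{L²(μ)} ‖θ_n − θ⋆‖_{L²(μ;𝓗)}`. -/
theorem stmt17 {𝒳 H : Type*} [MeasurableSpace 𝒳]
    [NormedAddCommGroup H] [InnerProductSpace ℝ H] [CompleteSpace H]
    (μ : Measure 𝒳) [IsProbabilityMeasure μ]
    (η : ℝ) (hη : 0 < η)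
    (πs πn : 𝒳 → ℝ) (hπs : ∀ x, η ≤ πs x) (hπn : ∀ x, η ≤ πn x)
    (θn θs : 𝒳 → H)
    (h1 : Integrable (fun x => (πn x - πs x) ^ 2) μ)
    (h2 : Integrable (fun x => ‖θn x - θs x‖ ^ 2) μ)
    (h3 : Integrable (fun x => (1 - πs x / πn x) • (θn x - θs x)) μ) :
    ‖∫ x, (1 - πs x / πn x) • (θn x - θs x) ∂μ‖
      ≤ η⁻¹ * Real.sqrt (∫ x, (πn x - πs x) ^ 2 ∂μ)
          * Real.sqrt (∫ x, ‖θn x - θs x‖ ^ 2 ∂μ) := by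
  set f : 𝒳 → ℝ := fun x => |πn x - πs x| with hf
  set g : 𝒳 → ℝ := fun x => ‖θn x - θs x‖ with hg
  have hfm : AEStronglyMeasurable f μ := by
    have := h1.aestronglyMeasurable
    have : AEStronglyMeasurable (fun x => Real.sqrt ((πn x - πs x) ^ 2)) μ :=
      Real.continuous_sqrt.comp_aestronglyMeasurable this
    simpa [Real.sqrt_sq_eq_abs] using this
  have hgm : AEStronglyMeasurable g μ := by
    have := h2.aestronglyMeasurable
    have : AEStronglyMeasurable (fun x => Real.sqrt (‖θn x - θs x‖ ^ 2)) μ :=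
      Real.continuous_sqrt.comp_aestronglyMeasurable this
    simpa [Real.sqrt_sq (norm_nonneg _)] using this
  have hf2 : MemLp f 2 μ := by
    rw [memLp_two_iff_integrable_sq hfm]
    simp only [hf, sq_abs]
    exact h1
  have hg2 : MemLp g 2 μ := by
    rw [memLp_two_iff_integrable_sq hgm]
    exact h2
  -- Cauchy-Schwarz
  have hCS : ∫ x, f x * g x ∂μ
      ≤ Real.sqrt (∫ x, (πn x - πs x) ^ 2 ∂μ) * Real.sqrt (∫ x, ‖θn x - θs x‖ ^ 2 ∂μ) := by
    have hconj : Real.HolderConjugate 2 2 := Real.holderConjugate_iff.mpr ⟨one_lt_two, by norm_num⟩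
    have e2 : ENNReal.ofReal (2:ℝ) = 2 := by norm_num
    have := integral_mul_le_Lp_mul_Lq_of_nonneg (f := f) (g := g) hconj
      (Filter.Eventually.of_forall fun x => abs_nonneg _)
      (Filter.Eventually.of_forall fun x => norm_nonneg _)
      (e2 ▸ hf2) (e2 ▸ hg2)
    have ef : (∫ x, f x ^ (2:ℝ) ∂μ) = ∫ x, (πn x - πs x) ^ 2 ∂μ := by
      refine integral_congr_ae (Filter.Eventually.of_forall fun x => ?_)
      rw [show (2:ℝ) = ((2:ℕ):ℝ) by norm_num]
      simp [Real.rpow_natCast, hf, sq_abs]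
    have eg : (∫ x, g x ^ (2:ℝ) ∂μ) = ∫ x, ‖θn x - θs x‖ ^ 2 ∂μ := by
      refine integral_congr_ae (Filter.Eventually.of_forall fun x => ?_)
      rw [show (2:ℝ) = ((2:ℕ):ℝ) by norm_num]
      simp [Real.rpow_natCast, hg]
    rw [ef, eg] at this
    rw [Real.sqrt_eq_rpow, Real.sqrt_eq_rpow]
    exact this
  -- integrability of f * g
  have hfg : Integrable (fun x => f x * g x) μ := by
    refine Integrable.mono' (h1.add h2) (hfm.mul hgm) (Filter.Eventually.of_forall fun x => ?_)
    have h2fg : 2 * f x * g x ≤ f x ^ 2 + g x ^ 2 := two_mul_le_add_sq (f x) (g x)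
    have hfg0 : 0 ≤ f x * g x := mul_nonneg (abs_nonneg _) (norm_nonneg _)
    have e1 : f x ^ 2 = (πn x - πs x) ^ 2 := sq_abs _
    have e2 : g x ^ 2 = ‖θn x - θs x‖ ^ 2 := rfl
    rw [Real.norm_of_nonneg hfg0]
    simp only [Pi.add_apply]
    nlinarith
  -- pointwise bound on the norm of the integrand
  have hpt : ∀ x, ‖(1 - πs x / πn x) • (θn x - θs x)‖ ≤ η⁻¹ * (f x * g x) := by
    intro x
    have hπnx : 0 < πn x := lt_of_lt_of_le hη (hπn x)
    rw [norm_smul, Real.norm_eq_abs]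
    have habs : |1 - πs x / πn x| = |πn x - πs x| / πn x := by
      rw [show (1:ℝ) - πs x / πn x = (πn x - πs x) / πn x by field_simp, abs_div,
        abs_of_pos hπnx]
    rw [habs]
    have h1x : |πn x - πs x| / πn x ≤ η⁻¹ * |πn x - πs x| := by
      rw [div_le_iff₀ hπnx]
      calc η⁻¹ * |πn x - πs x| * πn x = |πn x - πs x| * (πn x / η) := by rw [div_eq_mul_inv]; ring
      _ ≥ |πn x - πs x| * 1 := by
          apply mul_le_mul_of_nonneg_left _ (abs_nonneg _)
          rw [le_div_iff₀ hη]
          linarith [hπn x]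
      _ = |πn x - πs x| := mul_one _
    calc |πn x - πs x| / πn x * ‖θn x - θs x‖
        ≤ η⁻¹ * |πn x - πs x| * ‖θn x - θs x‖ :=
          mul_le_mul_of_nonneg_right h1x (norm_nonneg _)
      _ = η⁻¹ * (f x * g x) := by ring
  calc ‖∫ x, (1 - πs x / πn x) • (θn x - θs x) ∂μ‖
      ≤ ∫ x, ‖(1 - πs x / πn x) • (θn x - θs x)‖ ∂μ := norm_integral_le_integral_norm _
    _ ≤ ∫ x, η⁻¹ * (f x * g x) ∂μ :=
        integral_mono h3.norm (hfg.const_mul _) hpt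
    _ = η⁻¹ * ∫ x, f x * g x ∂μ := integral_const_mul _ _
    _ ≤ η⁻¹ * (Real.sqrt (∫ x, (πn x - πs x) ^ 2 ∂μ) * Real.sqrt (∫ x, ‖θn x - θs x‖ ^ 2 ∂μ)) :=
        mul_le_mul_of_nonneg_left hCS (inv_nonneg.mpr hη.le)
    _ = _ := by ring
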